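/- arXiv:2506.09592 — 2 statements merged into one kernel-verified Lean document; each statement's English description precedes it below -/
import Mathlib

section
/- Let ξ_1, ξ_2, … be i.i.d. standard Gaussian random vectors in ℝ², let S_j := ξ_1 + ⋯ + ξ_j and T_j := |S_j|²/2 (so that (T_j)_{j≥1} has the law of (½|B_j|²)_{j≥1} for a standard two-dimensional Brownian motion B evaluated at integer times). Then for every α > 1: lim_{k→∞} inf_{n≥k} P( T_j ≤ α·j·log j for all j = k, k+1, …, n ) = 1. -/
open MeasureTheory ProbabilityTheory
open Real

lemma gauss_lint_exp (t : ℝ) :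
    ∫⁻ y, ENNReal.ofReal (rexp (t * y)) ∂(gaussianReal 0 1) =
      ENNReal.ofReal (rexp (t ^ 2 / 2)) := by
  rw [gaussianReal_of_var_ne_zero 0 one_ne_zero,
    lintegral_withDensity_eq_lintegral_mul _ (measurable_gaussianPDF 0 1)
      (by fun_prop)]
  have hpt : ∀ y : ℝ, (gaussianPDF 0 1 * fun y => ENNReal.ofReal (rexp (t * y))) y
      = ENNReal.ofReal (rexp (t ^ 2 / 2)) * gaussianPDF t 1 y := by
    intro y
    simp only [Pi.mul_apply, gaussianPDF]
    rw [← ENNReal.ofReal_mul (gaussianPDFReal_nonneg _ _ _),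
      ← ENNReal.ofReal_mul (exp_nonneg _)]
    congr 1
    simp only [gaussianPDFReal, NNReal.coe_one, mul_one, sub_zero]
    rw [mul_assoc, ← Real.exp_add, mul_comm (rexp _), mul_assoc, ← Real.exp_add]
    congr 1
    ring
  simp_rw [hpt]
  rw [lintegral_const_mul _ (measurable_gaussianPDF t 1),
    lintegral_gaussianPDF_eq_one t one_ne_zero, mul_one]

lemma gauss_lint_exp_sq {a : ℝ} (ha : a < 1/2) :
    ∫⁻ y, ENNReal.ofReal (rexp (a * y ^ 2)) ∂(gaussianReal 0 1) =
      ENNReal.ofReal ((Real.sqrt (1 - 2 * a))⁻¹) := by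
  have hb : (0:ℝ) < 1/2 - a := by linarith
  rw [gaussianReal_of_var_ne_zero 0 one_ne_zero,
    lintegral_withDensity_eq_lintegral_mul _ (measurable_gaussianPDF 0 1)
      (by measurability)]
  have hpt : ∀ y : ℝ, (gaussianPDF 0 1 * fun y => ENNReal.ofReal (rexp (a * y ^ 2))) y
      = ENNReal.ofReal ((Real.sqrt (2 * π))⁻¹ * rexp (-(1/2 - a) * y ^ 2)) := by
    intro y
    simp only [Pi.mul_apply, gaussianPDF]
    rw [← ENNReal.ofReal_mul (gaussianPDFReal_nonneg _ _ _)]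
    congr 1
    simp only [gaussianPDFReal, NNReal.coe_one, mul_one, sub_zero]
    rw [mul_assoc, ← Real.exp_add]
    congr 1
    ring
  simp_rw [hpt]
  rw [← ofReal_integral_eq_lintegral_ofReal
    (((integrable_exp_neg_mul_sq hb).const_mul _))
    (Filter.Eventually.of_forall fun y => by positivity)]
  congr 1
  rw [MeasureTheory.integral_const_mul, integral_gaussian]
  have h1 : (0:ℝ) < 1 - 2*a := by linarith
  rw [show π / (1/2 - a) = (1 - 2*a)⁻¹ * (2*π) by
      rw [div_eq_iff (by positivity)]; field_simp]
  have e1 : Real.sqrt ((1 - 2*a)⁻¹ * (2*π)) = (Real.sqrt (1-2*a))⁻¹ * (Real.sqrt 2 * Real.sqrt π) := by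
    rw [Real.sqrt_mul (by positivity : (0:ℝ) ≤ (1-2*a)⁻¹), Real.sqrt_inv,
      Real.sqrt_mul (by norm_num : (0:ℝ) ≤ 2)]
  rw [e1, mul_comm ((Real.sqrt (1-2*a))⁻¹), ← mul_assoc,
    Real.sqrt_mul (by norm_num : (0:ℝ) ≤ 2) π,
    inv_mul_cancel₀ (by positivity), one_mul]

lemma sum_mgf {Ω : Type} [MeasurableSpace Ω] {P : Measure Ω} [IsProbabilityMeasure P]
    (η : ℕ × Fin 2 → Ω → ℝ) (hmeas : ∀ i, Measurable (η i))
    (hindep : iIndepFun η P)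
    (hgauss : ∀ i, P.map (η i) = gaussianReal 0 1)
    (b : Fin 2) (m : ℕ) (t : ℝ) :
    ∫⁻ ω, ENNReal.ofReal (rexp (t * ∑ i ∈ Finset.range m, η (i, b) ω)) ∂P
      = ENNReal.ofReal (rexp (m * (t ^ 2 / 2))) := by
  have hF : Measurable fun x : ℝ => ENNReal.ofReal (rexp (t * x)) :=
    (Real.measurable_exp.comp (measurable_const_mul t)).ennreal_ofReal
  induction m with
  | zero => simp
  | succ m ih =>
    have hSfun : (∑ p ∈ (Finset.range m).map
          ⟨fun i => (i, b), fun a a' h => by simpa using h⟩, η p)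
        = fun ω => ∑ i ∈ Finset.range m, η (i, b) ω := by
      ext ω
      rw [Finset.sum_apply, Finset.sum_map]
      rfl
    have hSm : IndepFun (fun ω => ∑ i ∈ Finset.range m, η (i, b) ω) (η (m, b)) P := by
      have h := hindep.indepFun_finsetSum_of_notMem hmeas
        (s := (Finset.range m).map ⟨fun i => (i, b), fun a a' h => by simpa using h⟩)
        (i := (m, b)) (by simp; exact fun x hx h => absurd (congrArg Prod.fst h : x = m) (Nat.ne_of_lt hx))
      rwa [hSfun] at h
    have hSmeas : Measurable fun ω => ∑ i ∈ Finset.range m, η (i, b) ω :=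
      Finset.measurable_sum _ fun i _ => hmeas (i, b)
    have hc : IndepFun (fun ω => ENNReal.ofReal (rexp (t * ∑ i ∈ Finset.range m, η (i, b) ω)))
        (fun ω => ENNReal.ofReal (rexp (t * η (m, b) ω))) P := hSm.comp hF hF
    have hlast : ∫⁻ ω, ENNReal.ofReal (rexp (t * η (m, b) ω)) ∂P
        = ENNReal.ofReal (rexp (t ^ 2 / 2)) := by
      rw [← lintegral_map hF (hmeas (m, b)), hgauss, gauss_lint_exp]
    have key : ∫⁻ ω, ENNReal.ofReal (rexp (t * ∑ i ∈ Finset.range (m+1), η (i, b) ω)) ∂P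
        = ∫⁻ ω, ENNReal.ofReal (rexp (t * ∑ i ∈ Finset.range m, η (i, b) ω))
            * ENNReal.ofReal (rexp (t * η (m, b) ω)) ∂P := by
      refine lintegral_congr fun ω => ?_
      rw [Finset.sum_range_succ, mul_add, Real.exp_add, ENNReal.ofReal_mul (exp_nonneg _)]
    rw [key, lintegral_mul_eq_lintegral_mul_lintegral_of_indepFun''
        (show Measurable fun ω => ENNReal.ofReal (rexp (t * ∑ i ∈ Finset.range m, η (i, b) ω))
          from hF.comp hSmeas).aemeasurable
        (show Measurable fun ω => ENNReal.ofReal (rexp (t * η (m, b) ω))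
          from hF.comp (hmeas (m, b))).aemeasurable hc, ih, hlast,
      ← ENNReal.ofReal_mul (exp_nonneg _), ← Real.exp_add]
    congr 2
    push_cast
    ring

lemma sq_mgf {Ω : Type} [MeasurableSpace Ω] {P : Measure Ω} [IsProbabilityMeasure P]
    (η : ℕ × Fin 2 → Ω → ℝ) (hmeas : ∀ i, Measurable (η i))
    (hindep : iIndepFun η P)
    (hgauss : ∀ i, P.map (η i) = gaussianReal 0 1)
    (b : Fin 2) (m : ℕ) {c : ℝ} (hc : 0 ≤ c) (h2 : c * m < 1/2) :
    ∫⁻ ω, ENNReal.ofReal (rexp (c * (∑ i ∈ Finset.range m, η (i, b) ω) ^ 2)) ∂P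
      = ENNReal.ofReal ((Real.sqrt (1 - 2 * (c * m)))⁻¹) := by
  set γ := gaussianReal 0 1 with hγ
  have hSmeas : Measurable fun ω => ∑ i ∈ Finset.range m, η (i, b) ω :=
    Finset.measurable_sum _ fun i _ => hmeas (i, b)
  have hsq : Real.sqrt (2 * c) ^ 2 = 2 * c := Real.sq_sqrt (by linarith)
  have point : ∀ x : ℝ, ENNReal.ofReal (rexp (c * x ^ 2))
      = ∫⁻ y, ENNReal.ofReal (rexp ((Real.sqrt (2 * c) * x) * y)) ∂γ := by
    intro x
    rw [hγ, gauss_lint_exp]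
    congr 2
    rw [mul_pow, hsq]
    ring
  have humeas : Measurable fun p : Ω × ℝ =>
      ENNReal.ofReal (rexp (Real.sqrt (2 * c) * (∑ i ∈ Finset.range m, η (i, b) p.1) * p.2)) :=
    ((((hSmeas.comp measurable_fst).const_mul (Real.sqrt (2 * c))).mul
      measurable_snd).exp).ennreal_ofReal
  calc ∫⁻ ω, ENNReal.ofReal (rexp (c * (∑ i ∈ Finset.range m, η (i, b) ω) ^ 2)) ∂P
      = ∫⁻ ω, ∫⁻ y, ENNReal.ofReal
          (rexp ((Real.sqrt (2 * c) * ∑ i ∈ Finset.range m, η (i, b) ω) * y)) ∂γ ∂P :=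
        lintegral_congr fun ω => point _
    _ = ∫⁻ y, ∫⁻ ω, ENNReal.ofReal
          (rexp ((Real.sqrt (2 * c) * ∑ i ∈ Finset.range m, η (i, b) ω) * y)) ∂P ∂γ := by
        exact lintegral_lintegral_swap (by exact (humeas.comp measurable_id).aemeasurable)
    _ = ∫⁻ y, ENNReal.ofReal (rexp (m * ((Real.sqrt (2 * c) * y) ^ 2 / 2))) ∂γ := by
        refine lintegral_congr fun y => ?_
        rw [← sum_mgf η hmeas hindep hgauss b m (Real.sqrt (2 * c) * y)]
        refine lintegral_congr fun ω => ?_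
        congr 1
        ring
    _ = ∫⁻ y, ENNReal.ofReal (rexp ((c * m) * y ^ 2)) ∂γ := by
        refine lintegral_congr fun y => ?_
        congr 1
        rw [mul_pow, hsq]
        ring
    _ = ENNReal.ofReal ((Real.sqrt (1 - 2 * (c * m)))⁻¹) := gauss_lint_exp_sq h2

lemma two_mgf {Ω : Type} [MeasurableSpace Ω] {P : Measure Ω} [IsProbabilityMeasure P]
    (η : ℕ × Fin 2 → Ω → ℝ) (hmeas : ∀ i, Measurable (η i))
    (hindep : iIndepFun η P)
    (hgauss : ∀ i, P.map (η i) = gaussianReal 0 1)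
    (m : ℕ) {c : ℝ} (hc : 0 ≤ c) (h2 : c * m < 1/2) :
    ∫⁻ ω, ENNReal.ofReal (rexp (c * ((∑ i ∈ Finset.range m, η (i, 0) ω) ^ 2
        + (∑ i ∈ Finset.range m, η (i, 1) ω) ^ 2))) ∂P
      = ENNReal.ofReal ((1 - 2 * (c * m))⁻¹) := by
  have hGmeas : Measurable fun x : ℝ => ENNReal.ofReal (rexp (c * x ^ 2)) := by fun_prop
  have hSmeas : ∀ b : Fin 2, Measurable fun ω => ∑ i ∈ Finset.range m, η (i, b) ω :=
    fun b => Finset.measurable_sum _ fun i _ => hmeas (i, b)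
  -- independence of the two sums
  have hind : IndepFun (fun ω => ∑ i ∈ Finset.range m, η (i, 0) ω)
      (fun ω => ∑ i ∈ Finset.range m, η (i, 1) ω) P := by
    have hfin := hindep.indepFun_finset (Finset.range m ×ˢ {(0 : Fin 2)})
      (Finset.range m ×ˢ {(1 : Fin 2)})
      (by
        rw [Finset.disjoint_left]
        rintro ⟨i, b⟩ h0 h1
        simp only [Finset.mem_product, Finset.mem_singleton] at h0 h1
        rw [h0.2] at h1
        exact absurd h1.2 (by decide)) hmeas
    have hcomp := hfin.comp
      (φ := fun v : ((Finset.range m ×ˢ {(0 : Fin 2)} : Finset (ℕ × Fin 2)) : Type) → ℝ =>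
        ∑ i, v i)
      (ψ := fun v : ((Finset.range m ×ˢ {(1 : Fin 2)} : Finset (ℕ × Fin 2)) : Type) → ℝ =>
        ∑ i, v i)
      (Finset.measurable_sum _ fun i _ => measurable_pi_apply i)
      (Finset.measurable_sum _ fun i _ => measurable_pi_apply i)
    have key : ∀ b : Fin 2, ∀ ω : Ω,
        (∑ i : ((Finset.range m ×ˢ {b} : Finset (ℕ × Fin 2)) : Type), η i.1 ω)
          = ∑ i ∈ Finset.range m, η (i, b) ω := by
      intro b ω
      rw [Finset.sum_coe_sort (f := fun p => η p ω), Finset.sum_product]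
      simp
    convert hcomp using 1 <;> funext ω <;> simp only [Function.comp_apply] <;>
      exact (key _ ω).symm
  have hic : IndepFun
      (fun ω => ENNReal.ofReal (rexp (c * (∑ i ∈ Finset.range m, η (i, 0) ω) ^ 2)))
      (fun ω => ENNReal.ofReal (rexp (c * (∑ i ∈ Finset.range m, η (i, 1) ω) ^ 2))) P :=
    hind.comp hGmeas hGmeas
  have key : ∫⁻ ω, ENNReal.ofReal (rexp (c * ((∑ i ∈ Finset.range m, η (i, 0) ω) ^ 2
        + (∑ i ∈ Finset.range m, η (i, 1) ω) ^ 2))) ∂P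
      = ∫⁻ ω, ENNReal.ofReal (rexp (c * (∑ i ∈ Finset.range m, η (i, 0) ω) ^ 2))
          * ENNReal.ofReal (rexp (c * (∑ i ∈ Finset.range m, η (i, 1) ω) ^ 2)) ∂P := by
    refine lintegral_congr fun ω => ?_
    rw [mul_add, Real.exp_add, ENNReal.ofReal_mul (exp_nonneg _)]
  have h1nn : (0:ℝ) ≤ 1 - 2 * (c * m) := by linarith
  rw [key, lintegral_mul_eq_lintegral_mul_lintegral_of_indepFun''
      (show Measurable fun ω =>
          ENNReal.ofReal (rexp (c * (∑ i ∈ Finset.range m, η (i, 0) ω) ^ 2))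
        from hGmeas.comp (hSmeas 0)).aemeasurable
      (show Measurable fun ω =>
          ENNReal.ofReal (rexp (c * (∑ i ∈ Finset.range m, η (i, 1) ω) ^ 2))
        from hGmeas.comp (hSmeas 1)).aemeasurable hic,
    sq_mgf η hmeas hindep hgauss 0 m hc h2, sq_mgf η hmeas hindep hgauss 1 m hc h2,
    ← ENNReal.ofReal_mul (by positivity), ← mul_inv,
    Real.mul_self_sqrt h1nn]

lemma chernoff {Ω : Type} [MeasurableSpace Ω] {P : Measure Ω} [IsProbabilityMeasure P]
    (η : ℕ × Fin 2 → Ω → ℝ) (hmeas : ∀ i, Measurable (η i))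
    (hindep : iIndepFun η P)
    (hgauss : ∀ i, P.map (η i) = gaussianReal 0 1)
    {m : ℕ} (hm : 1 ≤ m) {s : ℝ} (hs0 : 0 < s) (hs1 : s < 1) {α : ℝ} (hα : 0 < α) :
    P {ω | 2 * (α * m * Real.log m) ≤ (∑ i ∈ Finset.range m, η (i, 0) ω) ^ 2
        + (∑ i ∈ Finset.range m, η (i, 1) ω) ^ 2}
      ≤ ENNReal.ofReal ((1 - s)⁻¹ * (m : ℝ) ^ (-(α * s))) := by
  have hmpos : (0:ℝ) < m := by exact_mod_cast hm
  set X : Ω → ℝ := fun ω => (∑ i ∈ Finset.range m, η (i, 0) ω) ^ 2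
      + (∑ i ∈ Finset.range m, η (i, 1) ω) ^ 2 with hX
  set c : ℝ := s / (2 * m) with hcdef
  have hc0 : 0 ≤ c := by positivity
  have hcm : c * m = s / 2 := by
    rw [hcdef]; field_simp
  have h2 : c * m < 1/2 := by rw [hcm]; linarith
  have hmg := two_mgf η hmeas hindep hgauss m hc0 h2
  rw [hcm] at hmg
  have hmg' : ∫⁻ ω, ENNReal.ofReal (rexp (c * X ω)) ∂P = ENNReal.ofReal ((1 - s)⁻¹) := by
    rw [hmg, show (1:ℝ) - 2 * (s / 2) = 1 - s by ring]
  set r : ℝ := 2 * (α * m * Real.log m) with hrdef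
  have hr0 : 0 ≤ r := by
    have : 0 ≤ Real.log m := Real.log_nonneg (by exact_mod_cast hm)
    positivity
  have hfmeas : Measurable fun ω => ENNReal.ofReal (rexp (c * X ω)) := by
    have : Measurable X := by
      apply Measurable.add <;>
        exact (Finset.measurable_sum _ fun i _ => hmeas (i, _)).pow_const 2
    fun_prop
  have markov := mul_meas_ge_le_lintegral (μ := P) hfmeas (ENNReal.ofReal (rexp (c * r)))
  rw [hmg'] at markov
  have hsub : {ω | r ≤ X ω} ⊆
      {ω | ENNReal.ofReal (rexp (c * r)) ≤ ENNReal.ofReal (rexp (c * X ω))} := fun ω h =>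
    ENNReal.ofReal_le_ofReal (exp_le_exp.2 (mul_le_mul_of_nonneg_left h hc0))
  have hmono := measure_mono (μ := P) hsub
  have key : ENNReal.ofReal (rexp (c * r)) * P {ω | r ≤ X ω} ≤ ENNReal.ofReal ((1 - s)⁻¹) :=
    le_trans (mul_le_mul_right hmono _) markov
  have hexp0 : ENNReal.ofReal (rexp (c * r)) ≠ 0 := by
    simp [ENNReal.ofReal_eq_zero, not_le, exp_pos]
  have hdiv : P {ω | r ≤ X ω} ≤ ENNReal.ofReal ((1 - s)⁻¹) / ENNReal.ofReal (rexp (c * r)) := by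
    rw [ENNReal.le_div_iff_mul_le (Or.inl hexp0) (Or.inl ENNReal.ofReal_ne_top), mul_comm]
    exact key
  refine hdiv.trans (le_of_eq ?_)
  rw [← ENNReal.ofReal_div_of_pos (exp_pos _), div_eq_mul_inv, ← Real.exp_neg]
  congr 2
  have hcr : c * r = α * s * Real.log m := by
    rw [hcdef, hrdef]; field_simp
  rw [hcr, Real.rpow_def_of_pos hmpos]
  ring_nf

/-- Lemma 5.2 (second part): for `T_j = |B_j|²/2` built from sums of i.i.d. standard
Gaussian vectors in `ℝ²`, the barrier `T_j ≤ α j log j` for `j = k,…,n` holds with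
probability tending to one as `k → ∞`, uniformly in `n ≥ k`. -/
theorem stmt_13 (Ω : Type) [MeasurableSpace Ω] (P : Measure Ω) [IsProbabilityMeasure P]
    (η : ℕ × Fin 2 → Ω → ℝ) (hmeas : ∀ i, Measurable (η i))
    (hindep : iIndepFun η P)
    (hgauss : ∀ i, P.map (η i) = gaussianReal 0 1)
    (α : ℝ) (hα : 1 < α) :
    ∀ ε : ℝ, 0 < ε → ∃ K : ℕ, ∀ k : ℕ, K ≤ k → ∀ n : ℕ, k ≤ n →
      1 - ε ≤ (P {ω | ∀ j : ℕ, k ≤ j → j ≤ n →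
          ((∑ i ∈ Finset.range j, η (i, 0) ω) ^ 2 +
              (∑ i ∈ Finset.range j, η (i, 1) ω) ^ 2) / 2 ≤
            α * j * Real.log j}).toReal := by
  intro ε hε
  have hα0 : (0:ℝ) < α := by linarith
  set s : ℝ := (1 + α) / (2 * α) with hsdef
  have hs0 : 0 < s := div_pos (by linarith) (by linarith)
  have hs1 : s < 1 := by rw [hsdef, div_lt_one (by linarith)]; linarith
  set β : ℝ := α * s with hβdef
  have hβeq : β = (1 + α) / 2 := by
    rw [hβdef, hsdef]
    field_simp
  have hβ1 : 1 < β := by rw [hβeq]; linarith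
  set C : ℝ := (1 - s)⁻¹ with hCdef
  have hC0 : 0 < C := by rw [hCdef]; exact inv_pos.2 (by linarith)
  set f : ℕ → ℝ := fun j => C * (j : ℝ) ^ (-β) with hfdef
  have hf0 : ∀ j, 0 ≤ f j := fun j => by
    rw [hfdef]
    positivity
  have hsum : Summable f := by
    apply Summable.mul_left
    have h := Real.summable_nat_rpow_inv.2 hβ1
    refine h.congr fun j => ?_
    rw [Real.rpow_neg (Nat.cast_nonneg _)]
  obtain ⟨t0, ht0⟩ := summable_iff_vanishing.1 hsum (Set.Ioo (-ε) ε)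
    (Ioo_mem_nhds (by linarith) hε)
  refine ⟨max (t0.sup id + 1) 1, fun k hk n hn => ?_⟩
  have hk1 : 1 ≤ k := le_trans (le_max_right _ _) hk
  -- measurability of the sums
  have hS : ∀ (b : Fin 2) (j : ℕ),
      Measurable fun ω => ∑ i ∈ Finset.range j, η (i, b) ω :=
    fun b j => Finset.measurable_sum _ fun i _ => hmeas (i, b)
  set E : Set Ω := {ω | ∀ j : ℕ, k ≤ j → j ≤ n →
      ((∑ i ∈ Finset.range j, η (i, 0) ω) ^ 2 +
          (∑ i ∈ Finset.range j, η (i, 1) ω) ^ 2) / 2 ≤ α * j * Real.log j} with hEdef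
  set A : ℕ → Set Ω := fun j => {ω | 2 * (α * j * Real.log j) ≤
      (∑ i ∈ Finset.range j, η (i, 0) ω) ^ 2 +
      (∑ i ∈ Finset.range j, η (i, 1) ω) ^ 2} with hAdef
  have hE : MeasurableSet E := by
    have hEeq : E = ⋂ j, ⋂ (_ : k ≤ j), ⋂ (_ : j ≤ n),
        {ω | ((∑ i ∈ Finset.range j, η (i, 0) ω) ^ 2 +
          (∑ i ∈ Finset.range j, η (i, 1) ω) ^ 2) / 2 ≤ α * j * Real.log j} := by
      ext ω
      simp [hEdef, Set.mem_iInter]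
    rw [hEeq]
    refine MeasurableSet.iInter fun j => MeasurableSet.iInter fun _ =>
      MeasurableSet.iInter fun _ => ?_
    exact measurableSet_le ((((hS 0 j).pow_const 2).add ((hS 1 j).pow_const 2)).div_const 2)
      measurable_const
  have hsub : Eᶜ ⊆ ⋃ j ∈ Finset.Icc k n, A j := by
    intro ω hω
    simp only [hEdef, Set.mem_compl_iff, Set.mem_setOf_eq] at hω
    push_neg at hω
    obtain ⟨j, hjk, hjn, hlt⟩ := hω
    refine Set.mem_biUnion (Finset.mem_Icc.2 ⟨hjk, hjn⟩) ?_
    simp only [hAdef, Set.mem_setOf_eq]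
    linarith
  have hchern : ∀ j ∈ Finset.Icc k n, P (A j) ≤ ENNReal.ofReal (f j) := by
    intro j hj
    have hj1 : 1 ≤ j := le_trans hk1 (Finset.mem_Icc.1 hj).1
    simpa [hfdef, hCdef, hβdef] using
      chernoff η hmeas hindep hgauss hj1 hs0 hs1 hα0
  have hcsum : ∑ j ∈ Finset.Icc k n, f j < ε := by
    have hdisj : Disjoint (Finset.Icc k n) t0 := by
      rw [Finset.disjoint_left]
      intro j hj hj0
      have h1 : t0.sup id + 1 ≤ k := le_trans (le_max_left _ _) hk
      have h2 : k ≤ j := (Finset.mem_Icc.1 hj).1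
      have h3 : j ≤ t0.sup id := Finset.le_sup (f := id) hj0
      omega
    exact (ht0 _ hdisj).2
  have hPEc : P Eᶜ ≤ ENNReal.ofReal ε := by
    calc P Eᶜ ≤ P (⋃ j ∈ Finset.Icc k n, A j) := measure_mono hsub
      _ ≤ ∑ j ∈ Finset.Icc k n, P (A j) := measure_biUnion_finset_le _ _
      _ ≤ ∑ j ∈ Finset.Icc k n, ENNReal.ofReal (f j) := Finset.sum_le_sum hchern
      _ = ENNReal.ofReal (∑ j ∈ Finset.Icc k n, f j) :=
          (ENNReal.ofReal_sum_of_nonneg fun j _ => hf0 j).symm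
      _ ≤ ENNReal.ofReal ε := ENNReal.ofReal_le_ofReal hcsum.le
  have hPEctoReal : (P Eᶜ).toReal ≤ ε :=
    ENNReal.toReal_le_of_le_ofReal hε.le hPEc
  have hPE : P E = 1 - P Eᶜ := by
    have h := measure_compl hE.compl (measure_ne_top P Eᶜ)
    rwa [compl_compl, measure_univ] at h
  rw [hPE, ENNReal.toReal_sub_of_le prob_le_one ENNReal.one_ne_top, ENNReal.toReal_one]
  linarith
end

section
/- Fix ε ∈ (0,1/2). There exists c > 0 such that for all integers n, k ≥ 1 with k/n < ε/2 and every real u > 0, the discrete Gaussian bridge X from 0 to u over n steps satisfies P( there exists j ∈ {1,…,k} with X_{n−j} ∉ [(1−ε)u, (1+ε)u] ) ≤ c·k·e^{−ε²u²/(4k)}. -/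
open MeasureTheory ProbabilityTheory

noncomputable section

variable {Ω : Type} [MeasurableSpace Ω]

/-- Partial sums `W_j = ξ_1 + ⋯ + ξ_j` of the increments `ξ`. -/
def pSum (ξ : ℕ → Ω → ℝ) (j : ℕ) (ω : Ω) : ℝ := ∑ i ∈ Finset.range j, ξ i ω

/-- The discrete Gaussian bridge from `r` to `u` over `k` steps, evaluated at time `j`:
`X_j = r + (j/k)(u − r) + W_j − (j/k) W_k`. -/
def bridge (ξ : ℕ → Ω → ℝ) (k : ℕ) (r u : ℝ) (j : ℕ) (ω : Ω) : ℝ :=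
  r + ((j : ℝ) / k) * (u - r) + pSum ξ j ω - ((j : ℝ) / k) * pSum ξ k ω

/-- `ξ` is an i.i.d. family of centered Gaussian random variables of variance `1/2`. -/
def iidGauss {ι : Type} (P : Measure Ω) (ξ : ι → Ω → ℝ) : Prop :=
  (∀ i, Measurable (ξ i)) ∧ iIndepFun ξ P ∧
    ∀ i, P.map (ξ i) = gaussianReal 0 (1 / 2)

set_option maxHeartbeats 1000000

open Real
open scoped NNReal ENNReal

lemma gauss_key (v : ℝ≥0) (hv : v ≠ 0) (t x : ℝ) :
    Real.exp (t * x) * gaussianPDFReal 0 v x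
      = Real.exp ((v : ℝ) * t ^ 2 / 2) * gaussianPDFReal (t * v) v x := by
  have hv0 : (0 : ℝ) < v := by positivity
  simp only [gaussianPDFReal, sub_zero]
  rw [mul_left_comm, mul_left_comm (Real.exp _), ← Real.exp_add, ← Real.exp_add]
  congr 2
  field_simp
  ring

lemma gauss_exp (v : ℝ≥0) (hv : v ≠ 0) (t : ℝ) :
    Integrable (fun x => Real.exp (t * x)) (gaussianReal 0 v) ∧
      ∫ x, Real.exp (t * x) ∂(gaussianReal 0 v) = Real.exp ((v : ℝ) * t ^ 2 / 2) := by
  rw [gaussianReal_of_var_ne_zero 0 hv]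
  have hpdf : ∀ x, ((gaussianPDF 0 v x).toReal) = gaussianPDFReal 0 v x := fun x =>
    ENNReal.toReal_ofReal (gaussianPDFReal_nonneg 0 v x)
  have hint : Integrable (fun x => Real.exp (t * x) * (gaussianPDF 0 v x).toReal) := by
    have : (fun x => Real.exp (t * x) * (gaussianPDF 0 v x).toReal)
        = fun x => Real.exp ((v : ℝ) * t ^ 2 / 2) * gaussianPDFReal (t * v) v x := by
      funext x; rw [hpdf, gauss_key v hv]
    rw [this]
    exact (integrable_gaussianPDFReal _ _).const_mul _
  constructor
  · exact (integrable_withDensity_iff (measurable_gaussianPDF 0 v)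
      (ae_of_all _ fun x => ENNReal.ofReal_lt_top)).2 hint
  · rw [show gaussianPDF 0 v = fun x => ((Real.toNNReal (gaussianPDFReal 0 v x) : ℝ≥0) : ℝ≥0∞)
      from rfl]
    rw [integral_withDensity_eq_integral_smul
      ((measurable_gaussianPDFReal 0 v).real_toNNReal) _]
    have : (fun x => Real.toNNReal (gaussianPDFReal 0 v x) • Real.exp (t * x))
        = fun x => Real.exp ((v : ℝ) * t ^ 2 / 2) * gaussianPDFReal (t * v) v x := by
      funext x
      rw [NNReal.smul_def, smul_eq_mul, Real.coe_toNNReal _ (gaussianPDFReal_nonneg 0 v x),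
        mul_comm, gauss_key v hv]
    rw [this, integral_const_mul, integral_gaussianPDFReal_eq_one _ hv, mul_one]

lemma xi_mgf (P : Measure Ω) (X : Ω → ℝ) (hX : Measurable X)
    (hmap : P.map X = gaussianReal 0 (1 / 2)) (t : ℝ) :
    Integrable (fun ω => Real.exp (t * X ω)) P ∧ mgf X P t = Real.exp (t ^ 2 / 4) := by
  have hv : ((1 : ℝ≥0) / 2) ≠ 0 := by norm_num
  obtain ⟨h1, h2⟩ := gauss_exp (1 / 2) hv t
  rw [← hmap] at h1 h2
  have hint : Integrable (fun ω => Real.exp (t * X ω)) P :=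
    (integrable_map_measure (measurable_exp.comp (measurable_const_mul t)).aestronglyMeasurable
      hX.aemeasurable).1 h1
  refine ⟨hint, ?_⟩
  have h2' : ∫ x, Real.exp (t * x) ∂(P.map X) = Real.exp (t ^ 2 / 4) := by
    rw [h2]
    norm_num [NNReal.coe_div]
    ring
  rw [mgf, ← h2', integral_map hX.aemeasurable
    ((measurable_const_mul t).exp).aestronglyMeasurable]

/-- Near its endpoint, the bridge from `0` to `u` stays within `[(1−ε)u, (1+ε)u]`
with Gaussian-type failure probability. -/
theorem stmt_16 (P : Measure Ω) [IsProbabilityMeasure P]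
    (ξ : ℕ → Ω → ℝ) (hξ : iidGauss P ξ)
    (ε : ℝ) (hε0 : 0 < ε) (hε1 : ε < 1 / 2) :
    ∃ c : ℝ, 0 < c ∧
      ∀ n k : ℕ, 1 ≤ n → 1 ≤ k → (k : ℝ) / n < ε / 2 → ∀ u : ℝ, 0 < u →
        (P {ω | ∃ j, 1 ≤ j ∧ j ≤ k ∧
            (bridge ξ n 0 u (n - j) ω < (1 - ε) * u ∨
              (1 + ε) * u < bridge ξ n 0 u (n - j) ω)}).toReal ≤
          c * k * Real.exp (-(ε ^ 2 * u ^ 2 / (4 * k))) := by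
  obtain ⟨hmeas, hindep, hmap⟩ := hξ
  refine ⟨2, two_pos, ?_⟩
  intro n k hn hk hkn u hu
  set E : ℝ := Real.exp (-(ε ^ 2 * u ^ 2 / (4 * k))) with hE
  have hEpos : 0 < E := Real.exp_pos _
  have hn0 : (0 : ℝ) < n := by exact_mod_cast hn
  have hk0 : (0 : ℝ) < k := by exact_mod_cast hk
  have hkrn : (k : ℝ) < n := by
    rw [div_lt_iff₀ hn0] at hkn; nlinarith
  -- per-j bound
  have perj : ∀ j : ℕ, 1 ≤ j → j ≤ k →
      P {ω | bridge ξ n 0 u (n - j) ω < (1 - ε) * u ∨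
        (1 + ε) * u < bridge ξ n 0 u (n - j) ω} ≤ ENNReal.ofReal (2 * E) := by
    intro j hj1 hjk
    have hjr : (j : ℝ) ≤ k := by exact_mod_cast hjk
    have hjn : j < n := by exact_mod_cast lt_of_le_of_lt hjr hkrn
    have hcast : ((n - j : ℕ) : ℝ) = (n : ℝ) - j := by
      rw [Nat.cast_sub hjn.le]
    set c : ℝ := ((n : ℝ) - j) / n with hc
    set a : ℕ → ℝ := fun i => (if i < n - j then (1 : ℝ) else 0) - c with ha
    set X : ℕ → Ω → ℝ := fun i ω => a i * ξ i ω with hX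
    set Y : Ω → ℝ := ∑ i ∈ Finset.range n, X i with hY
    have hY_eq : ∀ ω, Y ω = pSum ξ (n - j) ω - c * pSum ξ n ω := by
      intro ω
      rw [hY, Finset.sum_apply]
      have h1 : ∀ i ∈ Finset.range n, X i ω
          = (if i < n - j then ξ i ω else 0) - c * ξ i ω := by
        intro i _
        by_cases h : i < n - j <;> simp [hX, ha, h, sub_mul]
      rw [Finset.sum_congr rfl h1, Finset.sum_sub_distrib, ← Finset.mul_sum]
      congr 1
      rw [pSum, show (∑ i ∈ Finset.range (n - j), ξ i ω)
          = ∑ i ∈ Finset.range (n - j), (if i < n - j then ξ i ω else 0) from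
        Finset.sum_congr rfl fun i hi => by simp [Finset.mem_range.1 hi]]
      refine (Finset.sum_subset (Finset.range_subset_range.2 (Nat.sub_le n j)) ?_).symm
      intro i _ hi
      simp only [Finset.mem_range, not_lt] at hi
      simp [not_lt.2 hi]
    set V : ℝ := ∑ i ∈ Finset.range n, (a i) ^ 2 with hV
    have hVval : V = ((n : ℝ) - j) * (1 - c) ^ 2 + (j : ℝ) * c ^ 2 := by
      rw [hV, Finset.range_eq_Ico,
        ← Finset.sum_Ico_consecutive _ (Nat.zero_le (n - j)) (Nat.sub_le n j)]
      have e1 : ∀ i ∈ Finset.Ico 0 (n - j), (a i) ^ 2 = (1 - c) ^ 2 := by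
        intro i hi
        simp [ha, (Finset.mem_Ico.1 hi).2]
      have e2 : ∀ i ∈ Finset.Ico (n - j) n, (a i) ^ 2 = c ^ 2 := by
        intro i hi
        have : ¬ i < n - j := not_lt.2 (Finset.mem_Ico.1 hi).1
        simp [ha, this]
      rw [Finset.sum_congr rfl e1, Finset.sum_congr rfl e2, Finset.sum_const,
        Finset.sum_const, Nat.card_Ico, Nat.card_Ico, Nat.sub_zero, Nat.sub_sub_self hjn.le,
        nsmul_eq_mul, nsmul_eq_mul, hcast]
    have h1c : 1 - c = (j : ℝ) / n := by
      rw [hc]; field_simp; ring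
    have hVk : V ≤ (k : ℝ) := by
      rw [hVval, h1c, hc]
      have hjr0 : (0 : ℝ) ≤ j := Nat.cast_nonneg j
      have hnj : (0:ℝ) ≤ (n : ℝ) - j := by linarith [hjr.trans hkrn.le]
      have key : ((n : ℝ) - j) * ((j:ℝ) / n) ^ 2 + (j:ℝ) * (((n:ℝ) - j) / n) ^ 2
          = (j:ℝ) * ((n:ℝ) - j) / n := by
        field_simp
        ring
      rw [key]
      rw [div_le_iff₀ hn0]
      nlinarith
    have hV0 : 0 ≤ V := Finset.sum_nonneg fun i _ => sq_nonneg _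
    -- independence and measurability
    have hindep' : iIndepFun X P :=
      hindep.comp (fun i x => a i * x) (fun i => measurable_const_mul (a i))
    have hXmeas : ∀ i, Measurable (X i) := fun i => (hmeas i).const_mul _
    -- per-t integrability and mgf of Y
    have hint : ∀ t : ℝ, Integrable (fun ω => Real.exp (t * Y ω)) P := by
      intro t
      have := hindep'.integrable_exp_mul_sum (t := t) hXmeas
        (s := Finset.range n) (fun i _ => by
          have h := (xi_mgf P (ξ i) (hmeas i) (hmap i) (t * a i)).1
          simpa [hX, mul_assoc] using h)
      simpa [hY] using this
    have hmgf : ∀ t : ℝ, mgf Y P t = Real.exp (t ^ 2 * V / 4) := by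
      intro t
      rw [hY, hindep'.mgf_sum hXmeas]
      have e : ∀ i ∈ Finset.range n, mgf (X i) P t = Real.exp ((t * a i) ^ 2 / 4) := by
        intro i _
        have h := (xi_mgf P (ξ i) (hmeas i) (hmap i) (t * a i)).2
        rw [← h, mgf, mgf]
        congr 1
        funext ω
        rw [hX]
        ring_nf
      rw [Finset.prod_congr rfl e, ← Real.exp_sum]
      congr 1
      have e2 : ∀ i ∈ Finset.range n, (t * a i) ^ 2 / 4 = t ^ 2 * a i ^ 2 / 4 :=
        fun i _ => by ring
      rw [Finset.sum_congr rfl e2, ← Finset.sum_div, ← Finset.mul_sum, ← hV]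
    -- Chernoff
    set t₀ : ℝ := ε * u / k with ht₀
    have ht₀pos : 0 < t₀ := by positivity
    set s : ℝ := ε * u / 2 with hs
    have hbound : Real.exp (-t₀ * s) * Real.exp (t₀ ^ 2 * V / 4) ≤ E := by
      rw [← Real.exp_add, hE, Real.exp_le_exp]
      have h1 : t₀ ^ 2 * V / 4 ≤ t₀ ^ 2 * k / 4 := by
        have := sq_nonneg t₀
        nlinarith
      have h2 : -t₀ * s + t₀ ^ 2 * (k : ℝ) / 4 = -(ε ^ 2 * u ^ 2 / (4 * k)) := by
        rw [ht₀, hs]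
        field_simp
        ring
      linarith
    have hup : (P {ω | s ≤ Y ω}).toReal ≤ E := by
      have h := measure_ge_le_exp_mul_mgf (X := Y) (μ := P) (t := t₀) s ht₀pos.le (hint t₀)
      rw [hmgf t₀] at h
      exact h.trans hbound
    have hlow : (P {ω | Y ω ≤ -s}).toReal ≤ E := by
      have h := measure_le_le_exp_mul_mgf (X := Y) (μ := P) (t := -t₀) (-s)
        (neg_nonpos.2 ht₀pos.le) (hint (-t₀))
      rw [hmgf (-t₀)] at h
      have heq : - -t₀ * -s = -t₀ * s := by ring
      rw [heq, neg_sq] at h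
      exact h.trans hbound
    have hcu : c = 1 - (j : ℝ) / n := by
      rw [hc, sub_div, div_self hn0.ne']
    have hjn2 : (j : ℝ) / n < ε / 2 := by
      refine lt_of_le_of_lt ?_ hkn
      gcongr
    have hsub : {ω | bridge ξ n 0 u (n - j) ω < (1 - ε) * u ∨
        (1 + ε) * u < bridge ξ n 0 u (n - j) ω}
        ⊆ {ω | Y ω ≤ -s} ∪ {ω | s ≤ Y ω} := by
      intro ω hω
      have hbr : bridge ξ n 0 u (n - j) ω = c * u + Y ω := by
        rw [bridge, hcast, hY_eq ω, hc]
        ring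
      rcases hω with h | h
      · left
        rw [hbr, hcu] at h
        have hju : ((j : ℝ) / n) * u < (ε / 2) * u := by gcongr
        show Y ω ≤ -s
        rw [hs]
        nlinarith
      · right
        rw [hbr, hcu] at h
        have hju : ((j : ℝ) / n) * u ≥ 0 := by positivity
        show s ≤ Y ω
        rw [hs]
        nlinarith
    calc P {ω | bridge ξ n 0 u (n - j) ω < (1 - ε) * u ∨
          (1 + ε) * u < bridge ξ n 0 u (n - j) ω}
        ≤ P ({ω | Y ω ≤ -s} ∪ {ω | s ≤ Y ω}) := measure_mono hsub
      _ ≤ P {ω | Y ω ≤ -s} + P {ω | s ≤ Y ω} := measure_union_le _ _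
      _ ≤ ENNReal.ofReal E + ENNReal.ofReal E := by
          gcongr
          · exact (ENNReal.le_ofReal_iff_toReal_le (measure_ne_top P _) hEpos.le).2 hlow
          · exact (ENNReal.le_ofReal_iff_toReal_le (measure_ne_top P _) hEpos.le).2 hup
      _ = ENNReal.ofReal (2 * E) := by
          rw [← ENNReal.ofReal_add hEpos.le hEpos.le, two_mul]
  -- union bound
  have hsubU : {ω | ∃ j, 1 ≤ j ∧ j ≤ k ∧
      (bridge ξ n 0 u (n - j) ω < (1 - ε) * u ∨
        (1 + ε) * u < bridge ξ n 0 u (n - j) ω)}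
      ⊆ ⋃ j ∈ Finset.Icc 1 k, {ω | bridge ξ n 0 u (n - j) ω < (1 - ε) * u ∨
        (1 + ε) * u < bridge ξ n 0 u (n - j) ω} := by
    rintro ω ⟨j, hj1, hjk, hor⟩
    exact Set.mem_biUnion (Finset.mem_Icc.2 ⟨hj1, hjk⟩) hor
  have hmain : P {ω | ∃ j, 1 ≤ j ∧ j ≤ k ∧
      (bridge ξ n 0 u (n - j) ω < (1 - ε) * u ∨
        (1 + ε) * u < bridge ξ n 0 u (n - j) ω)} ≤ ENNReal.ofReal (2 * k * E) := by
    calc P {ω | ∃ j, 1 ≤ j ∧ j ≤ k ∧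
          (bridge ξ n 0 u (n - j) ω < (1 - ε) * u ∨
            (1 + ε) * u < bridge ξ n 0 u (n - j) ω)}
        ≤ ∑ j ∈ Finset.Icc 1 k, P {ω | bridge ξ n 0 u (n - j) ω < (1 - ε) * u ∨
            (1 + ε) * u < bridge ξ n 0 u (n - j) ω} :=
          (measure_mono hsubU).trans (measure_biUnion_finset_le _ _)
      _ ≤ ∑ _j ∈ Finset.Icc 1 k, ENNReal.ofReal (2 * E) :=
          Finset.sum_le_sum fun j hj =>
            perj j (Finset.mem_Icc.1 hj).1 (Finset.mem_Icc.1 hj).2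
      _ = (k : ℝ≥0∞) * ENNReal.ofReal (2 * E) := by
          rw [Finset.sum_const, Nat.card_Icc, nsmul_eq_mul]
          norm_num
      _ = ENNReal.ofReal (2 * k * E) := by
          rw [← ENNReal.ofReal_natCast, ← ENNReal.ofReal_mul (Nat.cast_nonneg k)]
          congr 1
          ring
  exact ENNReal.toReal_le_of_le_ofReal (by positivity) hmain
end
end
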